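/- Let H and A be finitely generated abelian groups, Tors(A) the torsion subgroup of A, Ā = A/Tors(A), and π : A → Ā the projection. Let q : Γ(H, A) → Γ(H, Ā) be the well-defined map sending [ν] to [π ∘ ν]. Then for every surjective homomorphism μ : H → Ā, the fiber q⁻¹([μ]) = {[ν] ∈ Γ(H,A) : q([ν]) = [μ]} is in bijection with Γ(ker μ, Tors(A)) = Epi(ker μ, Tors(A))/Aut(Tors(A)). In particular, all fibers of q are in bijection with one another. -/

import Mathlib

/-- The set of surjective homomorphisms between two additive groups. -/
def EpiSet (G A : Type*) [AddGroup G] [AddGroup A] : Type _ :=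
  {f : G →+ A // Function.Surjective f}

/-- Two epimorphisms are equivalent if they differ by an automorphism of the target. -/
def GammaRel (G A : Type*) [AddGroup G] [AddGroup A] (ν₁ ν₂ : EpiSet G A) : Prop :=
  ∃ α : A ≃+ A, ∀ g : G, α (ν₁.1 g) = ν₂.1 g

/-- The parameter set `Γ(G,A) = Epi(G,A)/Aut(A)`. -/
def GammaSet (G A : Type*) [AddGroup G] [AddGroup A] : Type _ :=
  Quot (GammaRel G A)

/-- Composition of an epimorphism `H → A` with the projection `A → A/Tors(A)`. -/
def qRep {H A : Type*} [AddCommGroup H] [AddCommGroup A] (ν : EpiSet H A) :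
    EpiSet H (A ⧸ AddCommGroup.torsion A) :=
  ⟨(QuotientAddGroup.mk' (AddCommGroup.torsion A)).comp ν.1,
    (QuotientAddGroup.mk'_surjective (AddCommGroup.torsion A)).comp ν.2⟩

def AddMonoid.IsTorsionFree (G : Type*) [AddMonoid G] : Prop :=
  ∀ g : G, g ≠ 0 → ¬IsOfFinAddOrder g

lemma AddMonoid.IsTorsionFree.quotient_torsion (A : Type*) [AddCommGroup A] :
    AddMonoid.IsTorsionFree (A ⧸ AddCommGroup.torsion A) := fun g hg hfin =>
  (isAddTorsionFree_iff_not_isOfFinAddOrder.1 inferInstance) hg hfin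

lemma gammaRel_equivalence (G A : Type*) [AddGroup G] [AddGroup A] :
    Equivalence (GammaRel G A) where
  refl ν := ⟨AddEquiv.refl A, fun g => rfl⟩
  symm {a b} := fun ⟨α, h⟩ => ⟨α.symm, fun g => by rw [← h g, α.symm_apply_apply]⟩
  trans {a b c} := fun ⟨α, h⟩ ⟨β, h'⟩ =>
    ⟨α.trans β, fun g => by rw [AddEquiv.trans_apply, h g, h' g]⟩

lemma gammaMk_eq {G A : Type*} [AddGroup G] [AddGroup A] (x y : EpiSet G A) :
    Quot.mk (GammaRel G A) x = Quot.mk _ y ↔ GammaRel G A x y :=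
  ⟨fun h => ((gammaRel_equivalence G A).eqvGen_iff).1 (Quot.eq.1 h), Quot.sound⟩

-- splitting lemma
lemma splitAux {P M : Type*} [AddCommGroup P] [AddCommGroup M]
    (hP : Module.Projective ℤ P)
    (g : M →+ P) (hg : Function.Surjective g) : ∃ s : P →+ M, ∀ b, g (s b) = b := by
  obtain ⟨h, hh⟩ := Module.projective_lifting_property (R := ℤ) g.toIntLinearMap LinearMap.id hg
  exact ⟨h.toAddMonoidHom, fun b => congrArg (fun f : P →ₗ[ℤ] P => f b) hh⟩

lemma projQ (A : Type*) [AddCommGroup A] [AddGroup.FG A] :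
    Module.Projective ℤ (A ⧸ AddCommGroup.torsion A) := by
  have h1 : Module.Finite ℤ A := Module.Finite.iff_addGroup_fg.2 ‹_›
  have h2 : Module.Finite ℤ (A ⧸ AddCommGroup.torsion A) :=
    Module.Finite.of_surjective (QuotientAddGroup.mk' _).toIntLinearMap
      (QuotientAddGroup.mk'_surjective _)
  have h3 : NoZeroSMulDivisors ℤ (A ⧸ AddCommGroup.torsion A) := by
    infer_instance
  infer_instance

section Rho
variable {A : Type*} [AddCommGroup A]

abbrev piT (A : Type*) [AddCommGroup A] : A →+ A ⧸ AddCommGroup.torsion A :=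
  QuotientAddGroup.mk' (AddCommGroup.torsion A)

lemma mem_torsion_of_pi {a : A} (h : piT A a = 0) : a ∈ AddCommGroup.torsion A :=
  (QuotientAddGroup.eq_zero_iff a).mp h

lemma pi_torsion (t : AddCommGroup.torsion A) : piT A (t : A) = 0 :=
  (QuotientAddGroup.eq_zero_iff _).mpr t.2

variable (s : (A ⧸ AddCommGroup.torsion A) →+ A) (hs : ∀ b, piT A (s b) = b)

def rho : A →+ AddCommGroup.torsion A :=
  (AddMonoidHom.id A - s.comp (piT A)).codRestrict _ (fun a => by
    apply mem_torsion_of_pi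
    show piT A (a - s (piT A a)) = 0
    rw [map_sub, hs, sub_self])

lemma coe_rho (a : A) : (rho s hs a : A) = a - s (piT A a) := rfl

end Rho

section Builder
variable {A : Type*} [AddCommGroup A]
  (s : (A ⧸ AddCommGroup.torsion A) →+ A) (hs : ∀ b, piT A (s b) = b)

/-- `a ↦ γ(ρ a) + d(π a) + s(α(π a))`. -/
def builderHom (γ : AddCommGroup.torsion A →+ AddCommGroup.torsion A)
    (d : (A ⧸ AddCommGroup.torsion A) →+ AddCommGroup.torsion A)
    (α : (A ⧸ AddCommGroup.torsion A) →+ (A ⧸ AddCommGroup.torsion A)) : A →+ A :=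
  (AddCommGroup.torsion A).subtype.comp ((γ.comp (rho s hs)) + d.comp (piT A))
    + s.comp (α.comp (piT A))

lemma builderHom_apply (γ d α) (a : A) :
    builderHom s hs γ d α a = (γ (rho s hs a) : A) + (d (piT A a) : A) + s (α (piT A a)) := by
  simp [builderHom]

lemma pi_builderHom (γ d α) (a : A) :
    piT A (builderHom s hs γ d α a) = α (piT A a) := by
  rw [builderHom_apply, map_add, map_add, pi_torsion, pi_torsion, hs, zero_add, zero_add]

lemma rho_builderHom (γ d α) (a : A) :
    rho s hs (builderHom s hs γ d α a) = γ (rho s hs a) + d (piT A a) := by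
  apply Subtype.ext
  rw [coe_rho, pi_builderHom, builderHom_apply]
  push_cast
  abel

lemma builder_inv (γ γ' d d' α α')
    (hγ : ∀ t, γ' (γ t) = t) (hα : ∀ b, α' (α b) = b)
    (hd : ∀ b, γ' (d b) + d' (α b) = 0) (a : A) :
    builderHom s hs γ' d' α' (builderHom s hs γ d α a) = a := by
  rw [builderHom_apply, rho_builderHom, pi_builderHom, map_add, hγ, hα]
  have : (γ' (d (piT A a)) : A) + (d' (α (piT A a)) : A) = ((0 : AddCommGroup.torsion A) : A) := by
    rw [← AddSubgroup.coe_add, hd]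
  push_cast at this ⊢
  rw [coe_rho]
  set S := s ((piT A) a)
  set X := ((d' (α ((piT A) a)) : AddCommGroup.torsion A) : A)
  set Y := ((γ' (d ((piT A) a)) : AddCommGroup.torsion A) : A)
  have h2 : X + Y = 0 := by rw [add_comm]; exact this
  have h3 : a - S + Y + X + S = (a - S + S) + (X + Y) := by abel
  rw [h3, h2, add_zero, sub_add_cancel]

/-- The automorphism `a ↦ γ(ρ a) + d(π a) + s(α(π a))` of `A`. -/
def builder (γ : AddCommGroup.torsion A ≃+ AddCommGroup.torsion A)
    (d : (A ⧸ AddCommGroup.torsion A) →+ AddCommGroup.torsion A)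
    (α : (A ⧸ AddCommGroup.torsion A) ≃+ (A ⧸ AddCommGroup.torsion A)) : A ≃+ A where
  toFun := builderHom s hs γ.toAddMonoidHom d α.toAddMonoidHom
  invFun := builderHom s hs γ.symm.toAddMonoidHom
    (-(γ.symm.toAddMonoidHom.comp (d.comp α.symm.toAddMonoidHom))) α.symm.toAddMonoidHom
  left_inv a := builder_inv s hs _ _ _ _ _ _
    (fun t => γ.symm_apply_apply t) (fun b => α.symm_apply_apply b)
    (fun b => by simp) a
  right_inv a := builder_inv s hs _ _ _ _ _ _
    (fun t => γ.apply_symm_apply t) (fun b => α.apply_symm_apply b)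
    (fun b => by simp) a
  map_add' := map_add _

lemma builder_apply (γ d α) (a : A) :
    builder s hs γ d α a = (γ (rho s hs a) : A) + (d (piT A a) : A) + s (α (piT A a)) :=
  builderHom_apply s hs _ _ _ a

lemma pi_builder (γ d α) (a : A) :
    piT A (builder s hs γ d α a) = α (piT A a) :=
  pi_builderHom s hs _ _ _ a

end Builder

section Mu
variable {H A : Type*} [AddCommGroup H] [AddCommGroup A]
  (s : (A ⧸ AddCommGroup.torsion A) →+ A) (hs : ∀ b, piT A (s b) = b)
  (μ : EpiSet H (A ⧸ AddCommGroup.torsion A))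
  (σ : (A ⧸ AddCommGroup.torsion A) →+ H) (hσ : ∀ b, μ.1 (σ b) = b)

def projK : H →+ μ.1.ker :=
  (AddMonoidHom.id H - σ.comp μ.1).codRestrict _ (fun h => by
    simp [AddMonoidHom.mem_ker, hσ])

lemma coe_projK (h : H) : (projK μ σ hσ h : H) = h - σ (μ.1 h) := rfl

lemma projK_ker (k : μ.1.ker) : projK μ σ hσ (k : H) = k := by
  apply Subtype.ext
  rw [coe_projK, AddMonoidHom.mem_ker.1 k.2, map_zero, sub_zero]

lemma projK_sigma (b) : projK μ σ hσ (σ b) = 0 := by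
  apply Subtype.ext
  rw [coe_projK, hσ]
  simp

/-- Build an epimorphism `H → A` from `λ : ker μ → Tors A`. -/
def ofLam (l : μ.1.ker →+ AddCommGroup.torsion A) : H →+ A :=
  (AddCommGroup.torsion A).subtype.comp (l.comp (projK μ σ hσ)) + s.comp μ.1

lemma ofLam_apply (l) (h : H) :
    ofLam s μ σ hσ l h = (l (projK μ σ hσ h) : A) + s (μ.1 h) := rfl

include hs in
lemma pi_ofLam (l) (h : H) : piT A (ofLam s μ σ hσ l h) = μ.1 h := by
  rw [ofLam_apply, map_add, pi_torsion, hs, zero_add]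

include hs in
lemma rho_ofLam (l) (h : H) : rho s hs (ofLam s μ σ hσ l h) = l (projK μ σ hσ h) := by
  apply Subtype.ext
  rw [coe_rho, pi_ofLam s hs, ofLam_apply, add_sub_cancel_right]

lemma ofLam_ker (l) (k : μ.1.ker) : ofLam s μ σ hσ l (k : H) = (l k : A) := by
  rw [ofLam_apply, projK_ker, AddMonoidHom.mem_ker.1 k.2, map_zero, add_zero]

lemma ofLam_sigma (l) (b) : ofLam s μ σ hσ l (σ b) = s b := by
  rw [ofLam_apply, projK_sigma, map_zero, AddSubgroup.coe_zero, zero_add, hσ]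

include hs in
lemma ofLam_surjective (l : μ.1.ker →+ AddCommGroup.torsion A) (hl : Function.Surjective l) :
    Function.Surjective (ofLam s μ σ hσ l) := by
  intro a
  obtain ⟨k, hk⟩ := hl (rho s hs a)
  refine ⟨(k : H) + σ (piT A a), ?_⟩
  rw [map_add, ofLam_ker, ofLam_sigma, hk, coe_rho, sub_add_cancel]

def gRep (l : EpiSet μ.1.ker (AddCommGroup.torsion A)) : EpiSet H A :=
  ⟨ofLam s μ σ hσ l.1, ofLam_surjective s hs μ σ hσ l.1 l.2⟩

include hs in
lemma qRep_gRep (l) : qRep (gRep s hs μ σ hσ l) = μ :=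
  Subtype.ext (AddMonoidHom.ext fun h => pi_ofLam s hs μ σ hσ l.1 h)

include hs in
lemma gRep_rel (l l' : EpiSet μ.1.ker (AddCommGroup.torsion A))
    (hrel : GammaRel _ _ l l') : GammaRel H A (gRep s hs μ σ hσ l) (gRep s hs μ σ hσ l') := by
  obtain ⟨γ, hγ⟩ := hrel
  refine ⟨builder s hs γ 0 (AddEquiv.refl _), fun h => ?_⟩
  show builder s hs γ 0 (AddEquiv.refl _) (ofLam s μ σ hσ l.1 h) = ofLam s μ σ hσ l'.1 h
  rw [builder_apply, rho_ofLam s hs, pi_ofLam s hs]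
  simp only [AddMonoidHom.zero_apply, AddSubgroup.coe_zero, add_zero, AddEquiv.coe_refl,
    id_eq, AddEquiv.coe_toAddMonoidHom]
  rw [ofLam_apply, hγ]

lemma gRep_rel_inv (l l' : EpiSet μ.1.ker (AddCommGroup.torsion A))
    (hrel : GammaRel H A (gRep s hs μ σ hσ l) (gRep s hs μ σ hσ l')) :
    GammaRel _ _ l l' := by
  obtain ⟨β, hβ⟩ := hrel
  have hmem : ∀ t : AddCommGroup.torsion A, β (t : A) ∈ AddCommGroup.torsion A :=
    fun t => β.toAddMonoidHom.isOfFinAddOrder t.2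
  have hmem' : ∀ t : AddCommGroup.torsion A, β.symm (t : A) ∈ AddCommGroup.torsion A :=
    fun t => β.symm.toAddMonoidHom.isOfFinAddOrder t.2
  refine ⟨{ toFun := fun t => ⟨β t, hmem t⟩
            invFun := fun t => ⟨β.symm t, hmem' t⟩
            left_inv := fun t => Subtype.ext (β.symm_apply_apply _)
            right_inv := fun t => Subtype.ext (β.apply_symm_apply _)
            map_add' := fun t t' => Subtype.ext (by push_cast; exact map_add β _ _) },
    fun k => ?_⟩
  apply Subtype.ext
  show β ((l.1 k : A)) = (l'.1 k : A)
  rw [← ofLam_ker s μ σ hσ l.1 k, ← ofLam_ker s μ σ hσ l'.1 k]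
  exact hβ (k : H)

end Mu

section Fiber
variable {H A : Type*} [AddCommGroup H] [AddCommGroup A]
  (s : (A ⧸ AddCommGroup.torsion A) →+ A) (hs : ∀ b, piT A (s b) = b)
  (μ : EpiSet H (A ⧸ AddCommGroup.torsion A))
  (σ : (A ⧸ AddCommGroup.torsion A) →+ H) (hσ : ∀ b, μ.1 (σ b) = b)
  (q : GammaSet H A → GammaSet H (A ⧸ AddCommGroup.torsion A))
  (hq : ∀ ν : EpiSet H A, q (Quot.mk _ ν) = Quot.mk _ (qRep ν))

include hs in
lemma pi_gRep (l) (h : H) : piT A ((gRep s hs μ σ hσ l).1 h) = μ.1 h :=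
  pi_ofLam s hs μ σ hσ l.1 h

def gMap : GammaSet μ.1.ker (AddCommGroup.torsion A) →
    {c : GammaSet H A // q c = Quot.mk _ μ} :=
  Quot.lift
    (fun l => ⟨Quot.mk _ (gRep s hs μ σ hσ l), by
      rw [hq]; exact congrArg _ (qRep_gRep s hs μ σ hσ l)⟩)
    (fun l l' hrel => Subtype.ext (Quot.sound (gRep_rel s hs μ σ hσ l l' hrel)))

lemma gMap_mk_val (l) : (gMap s hs μ σ hσ q hq (Quot.mk _ l)).1
    = Quot.mk _ (gRep s hs μ σ hσ l) := rfl

include hs hσ hq in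
lemma fiber_equiv :
    Nonempty ({c : GammaSet H A // q c = Quot.mk _ μ} ≃
      GammaSet μ.1.ker (AddCommGroup.torsion A)) := by
  have hinj : Function.Injective (gMap s hs μ σ hσ q hq) := by
    intro c c' h
    obtain ⟨l, rfl⟩ := Quot.exists_rep c
    obtain ⟨l', rfl⟩ := Quot.exists_rep c'
    have h2 := congrArg Subtype.val h
    rw [gMap_mk_val, gMap_mk_val] at h2
    exact Quot.sound (gRep_rel_inv s hs μ σ hσ l l' ((gammaMk_eq _ _).1 h2))
  have hsurj : Function.Surjective (gMap s hs μ σ hσ q hq) := by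
    rintro ⟨c, hc⟩
    obtain ⟨ν, rfl⟩ := Quot.exists_rep c
    rw [hq] at hc
    obtain ⟨α, hα⟩ := (gammaMk_eq _ _).1 hc
    obtain ⟨ν₂, hrel1, hπν₂⟩ : ∃ ν₂ : EpiSet H A,
        GammaRel H A ν ν₂ ∧ ∀ h : H, piT A (ν₂.1 h) = μ.1 h := by
      refine ⟨⟨(builder s hs (AddEquiv.refl _) 0 α).toAddMonoidHom.comp ν.1,
        (builder s hs (AddEquiv.refl _) 0 α).surjective.comp ν.2⟩,
        ⟨builder s hs (AddEquiv.refl _) 0 α, fun h => rfl⟩, fun h => ?_⟩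
      show piT A (builder s hs (AddEquiv.refl _) 0 α (ν.1 h)) = μ.1 h
      rw [pi_builder, ← hα h]
      rfl
    have hmemK : ∀ k : μ.1.ker, ν₂.1 (k : H) ∈ AddCommGroup.torsion A := fun k => by
      apply mem_torsion_of_pi
      rw [hπν₂, AddMonoidHom.mem_ker.1 k.2]
    set l : μ.1.ker →+ AddCommGroup.torsion A :=
      (ν₂.1.comp μ.1.ker.subtype).codRestrict _ (fun k => hmemK k) with hl
    have hlval : ∀ k : μ.1.ker, (l k : A) = ν₂.1 (k : H) := fun k => rfl
    have hlsurj : Function.Surjective l := by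
      intro t
      obtain ⟨h, hh⟩ := ν₂.2 (t : A)
      have hk : h ∈ μ.1.ker := by
        apply AddMonoidHom.mem_ker.2
        rw [← hπν₂, hh, pi_torsion]
      exact ⟨⟨h, hk⟩, Subtype.ext (by rw [hlval]; exact hh)⟩
    refine ⟨Quot.mk _ (⟨l, hlsurj⟩ : EpiSet μ.1.ker (AddCommGroup.torsion A)),
      Subtype.ext ?_⟩
    refine (gMap_mk_val s hs μ σ hσ q hq _).trans ?_
    set lE : EpiSet μ.1.ker (AddCommGroup.torsion A) := ⟨l, hlsurj⟩ with hlE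
    have hmemd : ∀ b, (gRep s hs μ σ hσ lE).1 (σ b) - ν₂.1 (σ b) ∈ AddCommGroup.torsion A := by
      intro b
      apply mem_torsion_of_pi
      rw [map_sub, hπν₂, pi_gRep s hs, hσ, sub_self]
    set d : (A ⧸ AddCommGroup.torsion A) →+ AddCommGroup.torsion A :=
      (((gRep s hs μ σ hσ lE).1 - ν₂.1).comp σ).codRestrict _ (fun b => hmemd b) with hd
    have hdval : ∀ b, (d b : A) = (gRep s hs μ σ hσ lE).1 (σ b) - ν₂.1 (σ b) := fun b => rfl
    have hagree : ∀ k : μ.1.ker, (gRep s hs μ σ hσ lE).1 (k : H) = ν₂.1 (k : H) := by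
      intro k
      show ofLam s μ σ hσ l (k : H) = ν₂.1 (k : H)
      rw [ofLam_ker, hlval]
    have hrel2 : GammaRel H A ν₂ (gRep s hs μ σ hσ lE) := by
      refine ⟨builder s hs (AddEquiv.refl _) d (AddEquiv.refl _), fun h => ?_⟩
      rw [builder_apply]
      simp only [AddEquiv.refl_apply]
      rw [coe_rho, hπν₂ h, hdval]
      have hker : h - σ (μ.1 h) ∈ μ.1.ker := by
        apply AddMonoidHom.mem_ker.2
        rw [map_sub, hσ, sub_self]
      have h1 : (gRep s hs μ σ hσ lE).1 (h - σ (μ.1 h)) = ν₂.1 (h - σ (μ.1 h)) :=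
        hagree ⟨_, hker⟩
      rw [map_sub, map_sub] at h1
      have h3 : (gRep s hs μ σ hσ lE).1 h
          = ν₂.1 h - ν₂.1 (σ (μ.1 h)) + (gRep s hs μ σ hσ lE).1 (σ (μ.1 h)) := by
        rw [← h1]; abel
      rw [h3]
      abel
    exact Quot.sound ((gammaRel_equivalence H A).symm
      ((gammaRel_equivalence H A).trans hrel1 hrel2))
  exact ⟨(Equiv.ofBijective _ ⟨hinj, hsurj⟩).symm⟩

end Fiber

section Part2
variable {M N : Type*} [AddCommGroup M] [AddCommGroup N]

lemma subgroup_fg {H : Type*} [AddCommGroup H] [AddGroup.FG H] (K : AddSubgroup H) :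
    AddGroup.FG ↥K := by
  have h1 : Module.Finite ℤ H := Module.Finite.iff_addGroup_fg.2 ‹_›
  have h2 : IsNoetherian ℤ H := isNoetherian_of_isNoetherianRing_of_finite ℤ H
  have h3 : (AddSubgroup.toIntSubmodule K).FG := IsNoetherian.noetherian _
  have h4 : Module.Finite ℤ ↥(AddSubgroup.toIntSubmodule K) := Module.Finite.iff_fg.2 h3
  exact Module.Finite.iff_addGroup_fg.1 h4

/-- Restriction of an `AddEquiv` to torsion subgroups. -/
def torsionCongr (e : M ≃+ N) :
    AddCommGroup.torsion M ≃+ AddCommGroup.torsion N where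
  toFun t := ⟨e t, e.toAddMonoidHom.isOfFinAddOrder t.2⟩
  invFun t := ⟨e.symm t, e.symm.toAddMonoidHom.isOfFinAddOrder t.2⟩
  left_inv t := Subtype.ext (e.symm_apply_apply _)
  right_inv t := Subtype.ext (e.apply_symm_apply _)
  map_add' t t' := Subtype.ext (by push_cast; exact map_add e _ _)

/-- If `N` is torsion free, the torsion of `M × N` is the torsion of `M`. -/
def torsionProdFst (hN : AddMonoid.IsTorsionFree N) :
    AddCommGroup.torsion (M × N) ≃+ AddCommGroup.torsion M where
  toFun t := ⟨t.1.1, (AddMonoidHom.fst M N).isOfFinAddOrder t.2⟩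
  invFun u := ⟨(u.1, 0), by
    have : ((u.1 : M), (0 : N)) = (AddMonoidHom.inl M N) u.1 := rfl
    rw [this]
    exact (AddMonoidHom.inl M N).isOfFinAddOrder u.2⟩
  left_inv t := by
    apply Subtype.ext
    have hsnd : (t : M × N).2 = 0 := by
      by_contra hne
      exact hN _ hne ((AddMonoidHom.snd M N).isOfFinAddOrder t.2)
    exact Prod.ext rfl hsnd.symm
  right_inv u := Subtype.ext rfl
  map_add' t t' := Subtype.ext rfl

lemma prod_isTorsionFree (hM : AddMonoid.IsTorsionFree M) (hN : AddMonoid.IsTorsionFree N) :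
    AddMonoid.IsTorsionFree (M × N) := by
  intro g hg hfin
  apply hg
  have h1 : g.1 = 0 := by
    by_contra hne
    exact hM _ hne ((AddMonoidHom.fst M N).isOfFinAddOrder hfin)
  have h2 : g.2 = 0 := by
    by_contra hne
    exact hN _ hne ((AddMonoidHom.snd M N).isOfFinAddOrder hfin)
  exact Prod.ext h1 h2

lemma torsion_subgroup_isTorsion (t : AddCommGroup.torsion M) : IsOfFinAddOrder t := by
  rw [isOfFinAddOrder_iff_nsmul_eq_zero]
  obtain ⟨n, hn, hn'⟩ := isOfFinAddOrder_iff_nsmul_eq_zero.1 t.2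
  refine ⟨n, hn, Subtype.ext ?_⟩
  push_cast
  exact hn'

/-- Splitting of a group over its torsion subgroup. -/
def torsionSplit (s : (M ⧸ AddCommGroup.torsion M) →+ M) (hs : ∀ b, piT M (s b) = b) :
    M ≃+ (AddCommGroup.torsion M) × (M ⧸ AddCommGroup.torsion M) where
  toFun := ((rho s hs).prod (piT M))
  invFun p := (p.1 : M) + s p.2
  left_inv m := by
    simp only [AddMonoidHom.prod_apply]
    rw [coe_rho, sub_add_cancel]
  right_inv p := by
    simp only [AddMonoidHom.prod_apply]
    refine Prod.ext (Subtype.ext ?_) ?_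
    · rw [coe_rho, map_add, pi_torsion, zero_add, hs, add_sub_cancel_right]
    · show piT M ((p.1 : M) + s p.2) = p.2
      rw [map_add, pi_torsion, zero_add, hs]
  map_add' := map_add _

/-- Splitting of `H` along a split surjection `μ`. -/
def muSplit {H A : Type*} [AddCommGroup H] [AddCommGroup A]
    (μ : EpiSet H (A ⧸ AddCommGroup.torsion A))
    (σ : (A ⧸ AddCommGroup.torsion A) →+ H) (hσ : ∀ b, μ.1 (σ b) = b) :
    H ≃+ μ.1.ker × (A ⧸ AddCommGroup.torsion A) where
  toFun := ((projK μ σ hσ).prod μ.1)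
  invFun p := (p.1 : H) + σ p.2
  left_inv h := by
    simp only [AddMonoidHom.prod_apply]
    rw [coe_projK, sub_add_cancel]
  right_inv p := by
    simp only [AddMonoidHom.prod_apply]
    refine Prod.ext (Subtype.ext ?_) ?_
    · rw [coe_projK, map_add, AddMonoidHom.mem_ker.1 p.1.2, zero_add, hσ, add_sub_cancel_right]
    · show μ.1 ((p.1 : H) + σ p.2) = p.2
      rw [map_add, AddMonoidHom.mem_ker.1 p.1.2, zero_add, hσ]
  map_add' := map_add _

/-- The cross homomorphism extracted from an equivalence of products. -/
def crossHom {T₁ T₂ M M' : Type*} [AddCommGroup T₁] [AddCommGroup T₂]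
    [AddCommGroup M] [AddCommGroup M'] (ψ : T₁ × M ≃+ T₂ × M') : M →+ M' :=
  (AddMonoidHom.snd T₂ M').comp (ψ.toAddMonoidHom.comp (AddMonoidHom.inr T₁ M))

lemma crossHom_inv {T₁ T₂ M M' : Type*} [AddCommGroup T₁] [AddCommGroup T₂]
    [AddCommGroup M] [AddCommGroup M'] (ψ : T₁ × M ≃+ T₂ × M')
    (hT₂ : ∀ t : T₂, IsOfFinAddOrder t) (hM : AddMonoid.IsTorsionFree M) (m : M) :
    crossHom ψ.symm (crossHom ψ m) = m := by
  have hc : crossHom ψ m = (ψ (0, m)).2 := rfl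
  have hdecomp : ((0 : T₂), (ψ ((0 : T₁), m)).2) = ψ (0, m) - ((ψ (0, m)).1, 0) := by
    ext <;> simp
  have hstep : crossHom ψ.symm (crossHom ψ m) = (ψ.symm ((0 : T₂), (ψ (0, m)).2)).2 := rfl
  rw [hstep, hdecomp, map_sub, ψ.symm_apply_apply]
  have hfin : IsOfFinAddOrder (ψ.symm ((ψ ((0:T₁), m)).1, (0:M'))) := by
    have h0 : (((ψ ((0:T₁), m)).1 : T₂), (0 : M')) = (AddMonoidHom.inl T₂ M') (ψ (0, m)).1 := rfl
    rw [h0]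
    exact ψ.symm.toAddMonoidHom.isOfFinAddOrder
      ((AddMonoidHom.inl T₂ M').isOfFinAddOrder (hT₂ _))
  have hsnd : (ψ.symm ((ψ ((0:T₁), m)).1, (0:M'))).2 = 0 := by
    by_contra hne
    exact hM _ hne ((AddMonoidHom.snd T₁ M).isOfFinAddOrder hfin)
  show ((((0 : T₁), m)) - ψ.symm ((ψ (0, m)).1, 0)).2 = m
  rw [Prod.snd_sub, hsnd, sub_zero]

/-- Cancellation of torsion parts. -/
def torsionfreeCancel {T₁ T₂ M M' : Type*} [AddCommGroup T₁] [AddCommGroup T₂]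
    [AddCommGroup M] [AddCommGroup M'] (ψ : T₁ × M ≃+ T₂ × M')
    (hT₁ : ∀ t : T₁, IsOfFinAddOrder t) (hT₂ : ∀ t : T₂, IsOfFinAddOrder t)
    (hM : AddMonoid.IsTorsionFree M) (hM' : AddMonoid.IsTorsionFree M') : M ≃+ M' where
  toFun := crossHom ψ
  invFun := crossHom ψ.symm
  left_inv m := crossHom_inv ψ hT₂ hM m
  right_inv m' := by
    have := crossHom_inv ψ.symm hT₁ hM' m'
    rwa [AddEquiv.symm_symm] at this
  map_add' := map_add _

end Part2

section Rank

lemma finCancel {a c : ℕ} (e : (Fin a → ℤ) ≃+ (Fin c → ℤ)) : a = c := by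
  have := LinearEquiv.finrank_eq e.toIntLinearEquiv
  rwa [Module.finrank_pi, Module.finrank_pi, Fintype.card_fin, Fintype.card_fin] at this

def prodFinAddEquiv (a b : ℕ) : ((Fin a → ℤ) × (Fin b → ℤ)) ≃+ (Fin (a + b) → ℤ) :=
  (AddEquiv.mk' (Equiv.sumArrowEquivProdArrow (Fin a) (Fin b) ℤ).symm
    (fun x y => funext fun i => by cases i <;> rfl)).trans
  (AddEquiv.arrowCongr finSumFinEquiv (AddEquiv.refl ℤ))

lemma freeRep (M : Type*) [AddCommGroup M] [inst : Module ℤ M]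
    [Module.Free ℤ M] [Module.Finite ℤ M] : ∃ n, Nonempty (M ≃+ (Fin n → ℤ)) := by
  let b := Module.Free.chooseBasis ℤ M
  refine ⟨Fintype.card (Module.Free.ChooseBasisIndex ℤ M), ⟨?_⟩⟩
  exact (b.equivFun.toAddEquiv).trans
    (AddEquiv.arrowCongr (Fintype.equivFin _) (AddEquiv.refl ℤ))

lemma addEquiv_cancel {M M' W : Type*} [AddCommGroup M] [AddCommGroup M'] [AddCommGroup W]
    {a b c : ℕ} (eM : M ≃+ (Fin a → ℤ)) (eM' : M' ≃+ (Fin c → ℤ)) (eW : W ≃+ (Fin b → ℤ))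
    (e : M × W ≃+ M' × W) : Nonempty (M ≃+ M') := by
  have big : (Fin (a + b) → ℤ) ≃+ (Fin (c + b) → ℤ) :=
    (prodFinAddEquiv a b).symm.trans ((AddEquiv.prodCongr eM.symm eW.symm).trans
      (e.trans ((AddEquiv.prodCongr eM' eW).trans (prodFinAddEquiv c b))))
  have hac : a = c := by have := finCancel big; omega
  subst hac
  exact ⟨eM.trans eM'.symm⟩

lemma quotFreeRep (A : Type*) [AddCommGroup A] [AddGroup.FG A] :
    ∃ n, Nonempty ((A ⧸ AddCommGroup.torsion A) ≃+ (Fin n → ℤ)) := by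
  have h1 : Module.Finite ℤ A := Module.Finite.iff_addGroup_fg.2 ‹_›
  have h2 : Module.Finite ℤ (A ⧸ AddCommGroup.torsion A) :=
    Module.Finite.of_surjective (QuotientAddGroup.mk' _).toIntLinearMap
      (QuotientAddGroup.mk'_surjective _)
  have h3 : NoZeroSMulDivisors ℤ (A ⧸ AddCommGroup.torsion A) := by
    infer_instance
  exact freeRep _

end Rank

section KernelIso
variable {H A : Type*} [AddCommGroup H] [AddGroup.FG H] [AddCommGroup A] [AddGroup.FG A]

lemma kernel_iso (μ μ' : EpiSet H (A ⧸ AddCommGroup.torsion A))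
    (σ : (A ⧸ AddCommGroup.torsion A) →+ H) (hσ : ∀ b, μ.1 (σ b) = b)
    (σ' : (A ⧸ AddCommGroup.torsion A) →+ H) (hσ' : ∀ b, μ'.1 (σ' b) = b) :
    Nonempty (↥μ.1.ker ≃+ ↥μ'.1.ker) := by
  haveI hK : AddGroup.FG ↥μ.1.ker := subgroup_fg _
  haveI hK' : AddGroup.FG ↥μ'.1.ker := subgroup_fg _
  -- torsion splittings of the kernels
  obtain ⟨sK, hsK⟩ := splitAux (projQ ↥μ.1.ker) (piT ↥μ.1.ker) (QuotientAddGroup.mk'_surjective _)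
  obtain ⟨sK', hsK'⟩ := splitAux (projQ ↥μ'.1.ker) (piT ↥μ'.1.ker) (QuotientAddGroup.mk'_surjective _)
  set θ := torsionSplit sK hsK
  set θ' := torsionSplit sK' hsK'
  set φ := muSplit μ σ hσ
  set φ' := muSplit μ' σ' hσ'
  have hAbar : AddMonoid.IsTorsionFree (A ⧸ AddCommGroup.torsion A) :=
    AddMonoid.IsTorsionFree.quotient_torsion A
  -- big equivalence
  have ψ : (AddCommGroup.torsion ↥μ.1.ker) ×
      ((↥μ.1.ker ⧸ AddCommGroup.torsion ↥μ.1.ker) × (A ⧸ AddCommGroup.torsion A)) ≃+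
      (AddCommGroup.torsion ↥μ'.1.ker) ×
      ((↥μ'.1.ker ⧸ AddCommGroup.torsion ↥μ'.1.ker) × (A ⧸ AddCommGroup.torsion A)) :=
    AddEquiv.prodAssoc.symm.trans
      ((AddEquiv.prodCongr θ.symm (AddEquiv.refl _)).trans
        (φ.symm.trans (φ'.trans
          ((AddEquiv.prodCongr θ' (AddEquiv.refl _)).trans AddEquiv.prodAssoc))))
  have hTK : ∀ t : AddCommGroup.torsion ↥μ.1.ker, IsOfFinAddOrder t :=
    torsion_subgroup_isTorsion
  have hTK' : ∀ t : AddCommGroup.torsion ↥μ'.1.ker, IsOfFinAddOrder t :=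
    torsion_subgroup_isTorsion
  have hFK : AddMonoid.IsTorsionFree
      ((↥μ.1.ker ⧸ AddCommGroup.torsion ↥μ.1.ker) × (A ⧸ AddCommGroup.torsion A)) :=
    prod_isTorsionFree (AddMonoid.IsTorsionFree.quotient_torsion _) hAbar
  have hFK' : AddMonoid.IsTorsionFree
      ((↥μ'.1.ker ⧸ AddCommGroup.torsion ↥μ'.1.ker) × (A ⧸ AddCommGroup.torsion A)) :=
    prod_isTorsionFree (AddMonoid.IsTorsionFree.quotient_torsion _) hAbar
  -- cancel torsion
  have χ := torsionfreeCancel ψ hTK hTK' hFK hFK'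
  -- free cancellation
  obtain ⟨a, ⟨eF⟩⟩ := quotFreeRep ↥μ.1.ker
  obtain ⟨c, ⟨eF'⟩⟩ := quotFreeRep ↥μ'.1.ker
  obtain ⟨b, ⟨eW⟩⟩ := quotFreeRep A
  obtain ⟨ξ⟩ := addEquiv_cancel eF eF' eW χ
  -- torsion part iso
  have τ : (AddCommGroup.torsion ↥μ.1.ker) ≃+ (AddCommGroup.torsion ↥μ'.1.ker) :=
    ((torsionProdFst hAbar).symm.trans
      ((torsionCongr φ.symm).trans ((torsionCongr φ').trans (torsionProdFst hAbar))))
  exact ⟨θ.trans ((AddEquiv.prodCongr τ ξ).trans θ'.symm)⟩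

end KernelIso

/-- Transport of `GammaSet` along an isomorphism of sources. -/
def gammaCongr {G G' A : Type*} [AddGroup G] [AddGroup G'] [AddGroup A]
    (e : G ≃+ G') : GammaSet G A ≃ GammaSet G' A where
  toFun := Quot.map (fun ν => ⟨ν.1.comp e.symm.toAddMonoidHom, ν.2.comp e.symm.surjective⟩)
    (fun ν ν' h => by obtain ⟨α, hα⟩ := h; exact ⟨α, fun g => hα _⟩)
  invFun := Quot.map (fun ν => ⟨ν.1.comp e.toAddMonoidHom, ν.2.comp e.surjective⟩)
    (fun ν ν' h => by obtain ⟨α, hα⟩ := h; exact ⟨α, fun g => hα _⟩)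
  left_inv := by
    apply Quot.ind
    intro ν
    apply Quot.sound
    exact ⟨AddEquiv.refl A, fun g => by simp⟩
  right_inv := by
    apply Quot.ind
    intro ν
    apply Quot.sound
    exact ⟨AddEquiv.refl A, fun g => by simp⟩

/-- Each fiber of the projection `q : Γ(H,A) → Γ(H,Ā)` over a class `[μ]` is in
bijection with `Γ(ker μ, Tors(A))`; in particular all fibers of `q` are in bijection
with one another. -/
theorem statement3 {H A : Type*} [AddCommGroup H] [AddGroup.FG H]
    [AddCommGroup A] [AddGroup.FG A]
    (q : GammaSet H A → GammaSet H (A ⧸ AddCommGroup.torsion A))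
    (hq : ∀ ν : EpiSet H A, q (Quot.mk _ ν) = Quot.mk _ (qRep ν)) :
    (∀ μ : EpiSet H (A ⧸ AddCommGroup.torsion A),
      Nonempty ({c : GammaSet H A // q c = Quot.mk _ μ} ≃
        GammaSet ↥μ.1.ker ↥(AddCommGroup.torsion A))) ∧
    ∀ b b' : GammaSet H (A ⧸ AddCommGroup.torsion A),
      Nonempty ({c : GammaSet H A // q c = b} ≃ {c : GammaSet H A // q c = b'}) := by
  obtain ⟨s, hs⟩ := splitAux (projQ A) (piT A) (QuotientAddGroup.mk'_surjective _)
  have main : ∀ μ : EpiSet H (A ⧸ AddCommGroup.torsion A),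
      Nonempty ({c : GammaSet H A // q c = Quot.mk _ μ} ≃
        GammaSet ↥μ.1.ker ↥(AddCommGroup.torsion A)) := by
    intro μ
    obtain ⟨σ, hσ⟩ := splitAux (projQ A) μ.1 μ.2
    exact fiber_equiv s hs μ σ hσ q hq
  refine ⟨main, fun b b' => ?_⟩
  obtain ⟨μ, rfl⟩ := Quot.exists_rep b
  obtain ⟨μ', rfl⟩ := Quot.exists_rep b'
  obtain ⟨σ, hσ⟩ := splitAux (projQ A) μ.1 μ.2
  obtain ⟨σ', hσ'⟩ := splitAux (projQ A) μ'.1 μ'.2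
  obtain ⟨e⟩ := kernel_iso μ μ' σ hσ σ' hσ'
  obtain ⟨E⟩ := main μ
  obtain ⟨E'⟩ := main μ'
  exact ⟨E.trans ((gammaCongr e).trans E'.symm)⟩
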